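/- Let 𝔥 be a complex Hilbert space, Γ an anti-unitary involution, P a basis projection (P + ΓPΓ = 1) with range 𝔭, and 𝔮 a closed Γ-invariant subspace. Then the following are equivalent: (i) if q ∈ 𝔮 and Pq = 0 then q = 0; (ii) P(𝔮^⊥) is dense in 𝔭; (iii) 𝔮 ∩ 𝔭 = {0}. -/

import Mathlib

open scoped ComplexInnerProductSpace

/-- Lemma 3.1: for a closed `Γ`-invariant subspace `𝔮` and a basis projection `P` with
range `𝔭`, the following are equivalent:
(i) `q ∈ 𝔮` and `P q = 0` imply `q = 0`;
(ii) `P 𝔮ᗮ` is dense in `𝔭`;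
(iii) `𝔮 ⊓ 𝔭 = ⊥`. -/
theorem car_density_equivalences
    {E : Type*} [NormedAddCommGroup E] [InnerProductSpace ℂ E] [CompleteSpace E]
    (Γ : E → E)
    (hΓ_add : ∀ x y, Γ (x + y) = Γ x + Γ y)
    (hΓ_smul : ∀ (c : ℂ) (x : E), Γ (c • x) = (starRingEnd ℂ) c • Γ x)
    (hΓ_inner : ∀ f h : E, ⟪Γ f, Γ h⟫ = ⟪h, f⟫)
    (hΓ_inv : ∀ x, Γ (Γ x) = x)
    (P : E →L[ℂ] E) (hP_proj : P ∘L P = P) (hP_sa : IsSelfAdjoint P)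
    (hP_basis : ∀ x, P x + Γ (P (Γ x)) = x)
    (𝔮 : Submodule ℂ E) (h𝔮_closed : IsClosed (𝔮 : Set E))
    (h𝔮Γ : ∀ q ∈ 𝔮, Γ q ∈ 𝔮) :
    ((∀ q ∈ 𝔮, P q = 0 → q = 0) ↔
        closure (P '' (𝔮ᗮ : Set E)) = (LinearMap.range (P : E →ₗ[ℂ] E) : Set E)) ∧
    ((closure (P '' (𝔮ᗮ : Set E)) = (LinearMap.range (P : E →ₗ[ℂ] E) : Set E)) ↔
        𝔮 ⊓ LinearMap.range (P : E →ₗ[ℂ] E) = ⊥) := by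
  -- basic facts
  have hΓ0 : Γ 0 = 0 := by
    have := hΓ_add 0 0
    simp only [add_zero] at this
    have h2 := congrArg (fun y => y - Γ 0) this
    simpa using h2.symm
  have hPP : ∀ x, P (P x) = P x := fun x => by
    have h := ContinuousLinearMap.ext_iff.mp hP_proj x
    simpa using h
  have hsym : ∀ x y : E, ⟪P x, y⟫ = ⟪x, P y⟫ := fun x y =>
    (ContinuousLinearMap.isSelfAdjoint_iff_isSymmetric.mp hP_sa) x y
  have hmemP : ∀ x : E, x ∈ LinearMap.range (P : E →ₗ[ℂ] E) ↔ P x = x := by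
    intro x
    constructor
    · rintro ⟨u, rfl⟩; exact hPP u
    · intro h; exact ⟨x, h⟩
  -- (iii) → (i)
  have h31 : 𝔮 ⊓ LinearMap.range (P : E →ₗ[ℂ] E) = ⊥ → (∀ q ∈ 𝔮, P q = 0 → q = 0) := by
    intro h3 q hq hPq
    have hb := hP_basis q
    rw [hPq, zero_add] at hb
    have hPΓq : P (Γ q) = Γ q := by
      have := congrArg Γ hb
      rwa [hΓ_inv] at this
    have : Γ q ∈ 𝔮 ⊓ LinearMap.range (P : E →ₗ[ℂ] E) := ⟨h𝔮Γ q hq, (hmemP _).mpr hPΓq⟩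
    rw [h3, Submodule.mem_bot] at this
    calc q = Γ (Γ q) := (hΓ_inv q).symm
    _ = Γ 0 := by rw [this]
    _ = 0 := hΓ0
  -- (i) → (iii)
  have h13 : (∀ q ∈ 𝔮, P q = 0 → q = 0) → 𝔮 ⊓ LinearMap.range (P : E →ₗ[ℂ] E) = ⊥ := by
    intro h1
    rw [Submodule.eq_bot_iff]
    rintro x ⟨hx𝔮, hxP⟩
    have hPx : P x = x := (hmemP x).mp hxP
    have hPΓx : P (Γ x) = 0 := by
      have hb := hP_basis x
      rw [hPx] at hb
      have : Γ (P (Γ x)) = 0 := by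
        have := congrArg (fun y => y - x) hb
        simpa [add_sub_cancel_left] using this
      have := congrArg Γ this
      rwa [hΓ_inv, hΓ0] at this
    have : Γ x = 0 := h1 (Γ x) (h𝔮Γ x hx𝔮) hPΓx
    calc x = Γ (Γ x) := (hΓ_inv x).symm
    _ = Γ 0 := by rw [this]
    _ = 0 := hΓ0
  -- (ii) → (iii)
  have h23 : closure (P '' (𝔮ᗮ : Set E)) = (LinearMap.range (P : E →ₗ[ℂ] E) : Set E) →
      𝔮 ⊓ LinearMap.range (P : E →ₗ[ℂ] E) = ⊥ := by
    intro h2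
    rw [Submodule.eq_bot_iff]
    rintro x ⟨hx𝔮, hxP⟩
    have hC : IsClosed {y : E | ⟪y, x⟫ = 0} :=
      isClosed_eq (Continuous.inner continuous_id continuous_const) continuous_const
    have hsub : P '' (𝔮ᗮ : Set E) ⊆ {y : E | ⟪y, x⟫ = 0} := by
      rintro _ ⟨y, hy, rfl⟩
      have hPx : P x = x := (hmemP x).mp hxP
      show ⟪P y, x⟫ = 0
      rw [hsym, hPx]
      exact (Submodule.mem_orthogonal' 𝔮 y).mp hy x hx𝔮
    have hxC : x ∈ {y : E | ⟪y, x⟫ = 0} := by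
      have : x ∈ closure (P '' (𝔮ᗮ : Set E)) := by
        rw [h2]; exact hxP
      exact closure_minimal hsub hC this
    exact inner_self_eq_zero.mp hxC
  -- (iii) → (ii)
  have h32 : 𝔮 ⊓ LinearMap.range (P : E →ₗ[ℂ] E) = ⊥ →
      closure (P '' (𝔮ᗮ : Set E)) = (LinearMap.range (P : E →ₗ[ℂ] E) : Set E) := by
    intro h3
    have hrc : IsClosed (LinearMap.range (P : E →ₗ[ℂ] E) : Set E) := by
      have hset : (LinearMap.range (P : E →ₗ[ℂ] E) : Set E) = {x | P x = x} := by
        ext x; exact hmemP x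
      rw [hset]
      exact isClosed_eq P.continuous continuous_id
    apply Set.Subset.antisymm
    · apply closure_minimal _ hrc
      rintro _ ⟨y, _, rfl⟩
      exact ⟨y, rfl⟩
    · intro x hx
      have hPx : P x = x := (hmemP x).mp hx
      set M : Submodule ℂ E := Submodule.map (P : E →ₗ[ℂ] E) 𝔮ᗮ with hM
      have hMset : (M : Set E) = P '' (𝔮ᗮ : Set E) := by
        simp [hM, Submodule.map_coe]
      have hclosure : closure (P '' (𝔮ᗮ : Set E)) = (Mᗮᗮ : Set E) := by
        rw [Submodule.orthogonal_orthogonal_eq_closure, Submodule.topologicalClosure_coe,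
          hMset]
      rw [hclosure]
      intro z hz
      have hPz𝔮 : P z ∈ 𝔮 := by
        have h𝔮oo : 𝔮ᗮᗮ = 𝔮 := by
          rw [Submodule.orthogonal_orthogonal_eq_closure]
          exact SetLike.coe_injective (by rw [Submodule.topologicalClosure_coe,
            h𝔮_closed.closure_eq])
        rw [← h𝔮oo]
        intro y hy
        have hPy : P y ∈ M := ⟨y, hy, rfl⟩
        have := hz (P y) hPy
        rwa [hsym] at this
      have hPz0 : P z = 0 := by
        have : P z ∈ 𝔮 ⊓ LinearMap.range (P : E →ₗ[ℂ] E) := ⟨hPz𝔮, ⟨z, rfl⟩⟩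
        rwa [h3, Submodule.mem_bot] at this
      calc ⟪z, x⟫ = ⟪z, P x⟫ := by rw [hPx]
      _ = ⟪P z, x⟫ := (hsym z x).symm
      _ = 0 := by rw [hPz0, inner_zero_left]
  exact ⟨⟨fun h1 => h32 (h13 h1), fun h2 => h31 (h23 h2)⟩, ⟨h23, h32⟩⟩
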